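/- For φ ∈ (0, π), the function B_s(φ)/sin φ is strictly increasing; indeed (B_s⁴/sin⁴φ)′ = 6(3−cos φ)(1−cos φ)³/sin⁵φ > 0. -/

import Mathlib

open Real Set

noncomputable def Bs (φ : ℝ) : ℝ :=
  ((1 - Real.cos φ) ^ 2 * (7 - 4 * Real.cos φ + Real.cos φ ^ 2)) ^ ((1 : ℝ) / 4)

lemma Bs_pow4 (x : ℝ) :
    Bs x ^ 4 = (1 - Real.cos x) ^ 2 * (7 - 4 * Real.cos x + Real.cos x ^ 2) := by
  have h2 : 0 < 7 - 4 * Real.cos x + Real.cos x ^ 2 := by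
    nlinarith [sq_nonneg (Real.cos x - 2), sq_nonneg (Real.cos x)]
  have hb : 0 ≤ (1 - Real.cos x) ^ 2 * (7 - 4 * Real.cos x + Real.cos x ^ 2) :=
    mul_nonneg (sq_nonneg _) h2.le
  rw [Bs, ← Real.rpow_natCast (_ ^ ((1:ℝ)/4)) 4, ← Real.rpow_mul hb]
  norm_num

lemma Bs_hasDeriv (φ : ℝ) (hs : Real.sin φ ≠ 0) :
    HasDerivAt (fun x => Bs x ^ 4 / Real.sin x ^ 4)
      (6 * (3 - Real.cos φ) * (1 - Real.cos φ) ^ 3 / Real.sin φ ^ 5) φ := by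
  have hfun : (fun x => Bs x ^ 4 / Real.sin x ^ 4) =
      fun x => ((1 - Real.cos x) ^ 2 * (7 - 4 * Real.cos x + Real.cos x ^ 2)) /
        Real.sin x ^ 4 := by
    funext x; rw [Bs_pow4]
  rw [hfun]
  have hc := Real.hasDerivAt_cos φ
  have h1 : HasDerivAt (fun x => 1 - Real.cos x) (Real.sin φ) φ := by
    exact ((hasDerivAt_const φ (1:ℝ)).sub hc).congr_deriv (by ring)
  have h2 : HasDerivAt (fun x => (1 - Real.cos x) ^ 2)
      (2 * (1 - Real.cos φ) ^ 1 * Real.sin φ) φ := h1.pow 2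
  have h3 : HasDerivAt (fun x => 7 - 4 * Real.cos x + Real.cos x ^ 2)
      ((0 - 4 * (-Real.sin φ)) + 2 * Real.cos φ ^ 1 * (-Real.sin φ)) φ :=
    ((hasDerivAt_const φ (7:ℝ)).sub (hc.const_mul 4)).add (hc.pow 2)
  have hu := h2.mul h3
  have hv : HasDerivAt (fun x => Real.sin x ^ 4)
      (4 * Real.sin φ ^ 3 * Real.cos φ) φ := by
    exact ((Real.hasDerivAt_sin φ).pow 4).congr_deriv (by norm_num)
  have hd := hu.div hv (pow_ne_zero 4 hs)
  refine hd.congr_deriv ?_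
  symm
  have hp : Real.sin φ ^ 2 = 1 - Real.cos φ ^ 2 := by
    nlinarith [Real.sin_sq_add_cos_sq φ]
  simp only [Pi.mul_apply]
  field_simp
  linear_combination (-1 *
    (2 * (1 - Real.cos φ) * (2 * Real.cos φ ^ 2 - 7 * Real.cos φ + 9))) * hp

theorem Bs_div_sin_strictMono :
    StrictMonoOn (fun φ => Bs φ / Real.sin φ) (Ioo 0 π) ∧
      ∀ φ ∈ Ioo (0 : ℝ) π,
        deriv (fun x => Bs x ^ 4 / Real.sin x ^ 4) φ =
          6 * (3 - Real.cos φ) * (1 - Real.cos φ) ^ 3 / Real.sin φ ^ 5 ∧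
        0 < deriv (fun x => Bs x ^ 4 / Real.sin x ^ 4) φ := by
  have hmain : ∀ φ ∈ Ioo (0 : ℝ) π,
      deriv (fun x => Bs x ^ 4 / Real.sin x ^ 4) φ =
        6 * (3 - Real.cos φ) * (1 - Real.cos φ) ^ 3 / Real.sin φ ^ 5 ∧
      0 < deriv (fun x => Bs x ^ 4 / Real.sin x ^ 4) φ := by
    intro φ hφ
    have hsin : 0 < Real.sin φ := Real.sin_pos_of_pos_of_lt_pi hφ.1 hφ.2
    have hder := (Bs_hasDeriv φ hsin.ne').deriv
    have hcos : Real.cos φ < 1 := by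
      nlinarith [Real.sin_sq_add_cos_sq φ, mul_pos hsin hsin]
    have hcos3 : Real.cos φ < 3 := by
      nlinarith [Real.neg_one_le_cos φ, Real.cos_le_one φ]
    refine ⟨hder, ?_⟩
    rw [hder]
    have h1 : 0 < 3 - Real.cos φ := by linarith
    have h2 : 0 < 1 - Real.cos φ := by linarith
    exact div_pos (by positivity) (by positivity)
  refine ⟨?_, hmain⟩
  -- strict monotonicity of Bs/sin
  have key : ∀ z ∈ Ioo (0:ℝ) π,
      Bs z / Real.sin z = (Bs z ^ 4 / Real.sin z ^ 4) ^ ((1:ℝ)/4) := by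
    intro z hz
    have hsz : 0 < Real.sin z := Real.sin_pos_of_pos_of_lt_pi hz.1 hz.2
    have hB : 0 ≤ Bs z ^ 4 := by positivity
    rw [Real.div_rpow hB (by positivity)]
    have hBz : 0 ≤ Bs z := by
      have h2 : 0 < 7 - 4 * Real.cos z + Real.cos z ^ 2 := by
        nlinarith [sq_nonneg (Real.cos z - 2)]
      exact Real.rpow_nonneg (mul_nonneg (sq_nonneg _) h2.le) _
    congr 1
    · rw [← Real.rpow_natCast (Bs z) 4, ← Real.rpow_mul hBz]
      norm_num
    · rw [← Real.rpow_natCast (Real.sin z) 4, ← Real.rpow_mul hsz.le]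
      norm_num
  have hgmono : StrictMonoOn (fun x => Bs x ^ 4 / Real.sin x ^ 4) (Ioo 0 π) := by
    apply strictMonoOn_of_deriv_pos (convex_Ioo 0 π)
    · intro z hz
      have hsz : 0 < Real.sin z := Real.sin_pos_of_pos_of_lt_pi hz.1 hz.2
      exact (Bs_hasDeriv z hsz.ne').differentiableAt.continuousAt.continuousWithinAt
    · intro z hz
      rw [interior_Ioo] at hz
      exact (hmain z hz).2
  intro x hx y hy hxy
  simp only
  rw [key x hx, key y hy]
  have hBx : 0 ≤ Bs x ^ 4 / Real.sin x ^ 4 := by positivity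
  exact Real.rpow_lt_rpow hBx (hgmono hx hy hxy) (by norm_num)
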